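/- arXiv:2204.00122 — 7 statements merged into one kernel-verified Lean document; each statement's English description precedes it below -/
import Mathlib

section
/- Let n ∈ ℕ, and let α, β ∈ ℝⁿ with α_i ≤ β_i for each i. Let φ: ℝⁿ → ℝⁿ act elementwise, φ(v)_i = φ_i(v_i), where each scalar function φ_i: ℝ → ℝ is sector bounded in [α_i, β_i]. Set A = diag(α) and B = diag(β). Then for every diagonal positive semidefinite matrix Λ ∈ ℝ^{n×n}, every v ∈ ℝⁿ, and w = φ(v), it holds that [v; w]ᵀ [[−2ABΛ, (A+B)Λ], [(A+B)Λ, −2Λ]] [v; w] ≥ 0. -/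
open Matrix

/-- quadratic constraint satisfied by an elementwise sector bounded
nonlinearity, for any diagonal positive semidefinite multiplier `Λ`. -/
theorem sector_quadratic_constraint
    (n : ℕ) (α β : Fin n → ℝ) (hαβ : ∀ i, α i ≤ β i)
    (φs : Fin n → ℝ → ℝ)
    (hsector : ∀ i, ∀ ν : ℝ, (φs i ν - α i * ν) * (β i * ν - φs i ν) ≥ 0)
    (φ : (Fin n → ℝ) → (Fin n → ℝ)) (hφ : ∀ v i, φ v i = φs i (v i))
    (A B : Matrix (Fin n) (Fin n) ℝ)
    (hA : A = Matrix.diagonal α) (hB : B = Matrix.diagonal β)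
    (Λ : Matrix (Fin n) (Fin n) ℝ)
    (hΛdiag : ∀ i j, i ≠ j → Λ i j = 0) (hΛ : Λ.PosSemidef)
    (v w : Fin n → ℝ) (hw : w = φ v) :
    0 ≤ (Sum.elim v w) ⬝ᵥ
      ((Matrix.fromBlocks (-(2 : ℝ) • (A * B * Λ)) ((A + B) * Λ)
        ((A + B) * Λ) (-(2 : ℝ) • Λ)) *ᵥ (Sum.elim v w)) := by
  have hΛeq : Λ = Matrix.diagonal (fun i => Λ i i) := by
    ext i j
    by_cases h : i = j
    · subst h; simp
    · simp [h, hΛdiag i j h]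
  have hdiag : ∀ i, 0 ≤ Λ i i := fun i => by
    simpa [dotProduct, Matrix.mulVec, Pi.single_apply] using hΛ.dotProduct_mulVec_nonneg (Pi.single i 1)
  subst hA hB hw
  rw [hΛeq]
  simp only [Matrix.diagonal_mul_diagonal, Matrix.fromBlocks_mulVec,
    Matrix.diagonal_mulVec_single, Matrix.mulVec_diagonal, Matrix.smul_mulVec,
    Matrix.add_mul, Matrix.add_mulVec, dotProduct, Fintype.sum_sum_type,
    Sum.elim_inl, Sum.elim_inr, Pi.add_apply, Pi.smul_apply, smul_eq_mul]
  rw [← Finset.sum_add_distrib]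
  apply Finset.sum_nonneg
  intro i _
  have h1 := hsector i (v i)
  have h2 := hdiag i
  simp only [Function.comp_apply, Sum.elim_inl, Sum.elim_inr, hφ]
  nlinarith
end

section
/- Let 𝒜 ∈ ℝ^{n×n}, ℬ ∈ ℝ^{n×m}, 𝒞 ∈ ℝ^{m×n}, 𝒟 ∈ ℝ^{m×m}, let P ∈ ℝ^{n×n} be symmetric positive definite, Λ ∈ ℝ^{m×m} diagonal positive definite, and ρ ∈ [0,1). Suppose the Lyapunov LMI holds: [[𝒜ᵀP𝒜 − ρ²P, 𝒜ᵀPℬ], [ℬᵀP𝒜, ℬᵀPℬ]] + [[𝒞, 𝒟], [0, I]]ᵀ [[Λ, 0], [0, −Λ]] [[𝒞, 𝒟], [0, I]] ≺ 0. Then for all ζ ∈ ℝⁿ and z ∈ ℝ^m such that, with v = 𝒞ζ + 𝒟z, the quadratic constraint vᵀΛv − zᵀΛz ≥ 0 holds, one has (𝒜ζ + ℬz)ᵀP(𝒜ζ + ℬz) ≤ ρ² ζᵀPζ. -/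
open Matrix

/-- the Lyapunov LMI together with the quadratic constraint implies the
Lyapunov function decrease at rate `ρ²`. -/
theorem lyapunov_lmi_implies_decrease
    (n m : ℕ)
    (𝒜 : Matrix (Fin n) (Fin n) ℝ) (ℬ : Matrix (Fin n) (Fin m) ℝ)
    (𝒞 : Matrix (Fin m) (Fin n) ℝ) (𝒟 : Matrix (Fin m) (Fin m) ℝ)
    (P : Matrix (Fin n) (Fin n) ℝ) (hP : P.PosDef)
    (Λ : Matrix (Fin m) (Fin m) ℝ)
    (hΛdiag : ∀ i j, i ≠ j → Λ i j = 0) (hΛ : Λ.PosDef)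
    (ρ : ℝ) (hρ0 : 0 ≤ ρ) (hρ1 : ρ < 1)
    (hLMI : (-(Matrix.fromBlocks (𝒜ᵀ * P * 𝒜 - ρ ^ 2 • P) (𝒜ᵀ * P * ℬ)
        (ℬᵀ * P * 𝒜) (ℬᵀ * P * ℬ) +
      (Matrix.fromBlocks 𝒞 𝒟 0 1 : Matrix (Fin m ⊕ Fin m) (Fin n ⊕ Fin m) ℝ)ᵀ * (Matrix.fromBlocks Λ 0 0 (-Λ)) *
        (Matrix.fromBlocks 𝒞 𝒟 0 1 : Matrix (Fin m ⊕ Fin m) (Fin n ⊕ Fin m) ℝ))).PosDef) :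
    ∀ (ζ : Fin n → ℝ) (z : Fin m → ℝ),
      0 ≤ (𝒞 *ᵥ ζ + 𝒟 *ᵥ z) ⬝ᵥ (Λ *ᵥ (𝒞 *ᵥ ζ + 𝒟 *ᵥ z)) - z ⬝ᵥ (Λ *ᵥ z) →
      (𝒜 *ᵥ ζ + ℬ *ᵥ z) ⬝ᵥ (P *ᵥ (𝒜 *ᵥ ζ + ℬ *ᵥ z)) ≤ ρ ^ 2 * (ζ ⬝ᵥ (P *ᵥ ζ)) := by
  intro ζ z hQC
  set M : Matrix (Fin n ⊕ Fin m) (Fin n ⊕ Fin m) ℝ :=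
    Matrix.fromBlocks (𝒜ᵀ * P * 𝒜 - ρ ^ 2 • P) (𝒜ᵀ * P * ℬ)
        (ℬᵀ * P * 𝒜) (ℬᵀ * P * ℬ) +
      (Matrix.fromBlocks 𝒞 𝒟 0 1 : Matrix (Fin m ⊕ Fin m) (Fin n ⊕ Fin m) ℝ)ᵀ * (Matrix.fromBlocks Λ 0 0 (-Λ)) *
        (Matrix.fromBlocks 𝒞 𝒟 0 1 : Matrix (Fin m ⊕ Fin m) (Fin n ⊕ Fin m) ℝ) with hMdef
  have key : ∀ x : Fin n ⊕ Fin m → ℝ, x ⬝ᵥ (M *ᵥ x) ≤ 0 := by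
    intro x
    by_cases hx : x = 0
    · simp [hx]
    · have := (Matrix.posDef_iff_dotProduct_mulVec.mp hLMI).2 hx
      simp only [Matrix.neg_mulVec, dotProduct_neg, star_trivial] at this
      linarith
  have hx := key (Sum.elim ζ z)
  have hexp : (Sum.elim ζ z) ⬝ᵥ (M *ᵥ (Sum.elim ζ z))
      = ((𝒜 *ᵥ ζ + ℬ *ᵥ z) ⬝ᵥ (P *ᵥ (𝒜 *ᵥ ζ + ℬ *ᵥ z)) - ρ ^ 2 * (ζ ⬝ᵥ (P *ᵥ ζ)))
        + ((𝒞 *ᵥ ζ + 𝒟 *ᵥ z) ⬝ᵥ (Λ *ᵥ (𝒞 *ᵥ ζ + 𝒟 *ᵥ z)) - z ⬝ᵥ (Λ *ᵥ z)) := by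
    rw [hMdef]
    simp only [Matrix.fromBlocks_multiply, Matrix.fromBlocks_mulVec, Matrix.fromBlocks_transpose,
      sumElim_dotProduct_sumElim, Matrix.add_mulVec, Matrix.sub_mulVec,
      Matrix.mulVec_add, dotProduct_add, dotProduct_sub, Matrix.smul_mulVec,
      dotProduct_smul, Matrix.neg_mulVec, dotProduct_neg, neg_dotProduct, add_dotProduct,
      Matrix.dotProduct_mulVec, ← Matrix.vecMul_vecMul, Matrix.add_vecMul, Matrix.sub_vecMul,
      Matrix.vecMul_transpose, smul_eq_mul,
      Matrix.transpose_zero, Matrix.transpose_one, Matrix.neg_mul, Matrix.mul_neg,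
      Matrix.vecMul_neg, Matrix.neg_vecMul,
      Matrix.zero_mul, Matrix.mul_zero, Matrix.mul_one, Matrix.one_mul, add_zero, zero_add,
      Matrix.zero_mulVec, Matrix.vecMul_zero, Matrix.zero_vecMul, zero_dotProduct,
      dotProduct_zero, Matrix.vecMul_one, Matrix.one_mulVec,
      Sum.elim_comp_inl, Sum.elim_comp_inr]
    ring
  rw [hexp] at hx
  linarith
end

section
/- Let 𝒜 ∈ ℝ^{n×n}, ℬ ∈ ℝ^{n×m}, 𝒞 ∈ ℝ^{m×n}, 𝒟 ∈ ℝ^{m×m}, and let φ̃: ℝ^m → ℝ^m act elementwise with each scalar component sector bounded in [−1, 1]. Let sequences ζ: ℕ → ℝⁿ, v, z: ℕ → ℝ^m satisfy ζ(k+1) = 𝒜ζ(k) + ℬz(k), v(k) = 𝒞ζ(k) + 𝒟z(k), and z(k) = φ̃(v(k)) for all k. Suppose there exist a symmetric positive definite P ∈ ℝ^{n×n}, a diagonal positive definite Λ ∈ ℝ^{m×m}, and ρ ∈ [0,1) such that the Lyapunov LMI [[𝒜ᵀP𝒜 − ρ²P, 𝒜ᵀPℬ], [ℬᵀP𝒜,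 ℬᵀPℬ]] + [[𝒞, 𝒟], [0, I]]ᵀ [[Λ, 0], [0, −Λ]] [[𝒞, 𝒟], [0, I]] ≺ 0 holds. Then for all k ≥ 0, ‖ζ(k)‖ ≤ √(λ_max(P)/λ_min(P)) · ρᵏ · ‖ζ(0)‖, where λ_max(P), λ_min(P) are the largest and smallest eigenvalues of P; in particular the origin of the closed-loop system is exponentially stable with rate ρ. -/
open Matrix

lemma rayleigh_aux' {n : ℕ} {P : Matrix (Fin n) (Fin n) ℝ} (hP : P.IsHermitian) (x : Fin n → ℝ) :
    x ⬝ᵥ (P *ᵥ x) =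
      ∑ i, hP.eigenvalues i *
        ((star (hP.eigenvectorUnitary : Matrix (Fin n) (Fin n) ℝ) *ᵥ x) i) ^ 2 ∧
    ∑ i, x i ^ 2 =
      ∑ i, ((star (hP.eigenvectorUnitary : Matrix (Fin n) (Fin n) ℝ) *ᵥ x) i) ^ 2 := by
  set U : Matrix (Fin n) (Fin n) ℝ := (hP.eigenvectorUnitary : Matrix (Fin n) (Fin n) ℝ) with hU
  set c : Fin n → ℝ := star U *ᵥ x with hc
  have hcc : x ᵥ* U = c := by
    rw [hc, Matrix.star_eq_conjTranspose, conjTranspose_eq_transpose_of_trivial,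
      Matrix.mulVec_transpose]
  constructor
  · conv_lhs => rw [hP.spectral_theorem, Unitary.conjStarAlgAut_apply]
    rw [← hU, ← Matrix.mulVec_mulVec, ← Matrix.mulVec_mulVec, Matrix.dotProduct_mulVec, hcc]
    simp [dotProduct, Matrix.mulVec_diagonal, sq, mul_comm, mul_assoc, mul_left_comm, hc]
  · have h1 : U * star U = 1 := Matrix.mem_unitaryGroup_iff.mp hP.eigenvectorUnitary.2
    have : ∑ i, x i ^ 2 = x ⬝ᵥ ((U * star U) *ᵥ x) := by
      rw [h1, Matrix.one_mulVec]; simp [dotProduct, sq]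
    rw [this, ← Matrix.mulVec_mulVec, Matrix.dotProduct_mulVec, hcc]
    simp [dotProduct, sq, hc]

lemma lmi_expand' (n m : ℕ)
    (𝒜 : Matrix (Fin n) (Fin n) ℝ) (ℬ : Matrix (Fin n) (Fin m) ℝ)
    (𝒞 : Matrix (Fin m) (Fin n) ℝ) (𝒟 : Matrix (Fin m) (Fin m) ℝ)
    (P : Matrix (Fin n) (Fin n) ℝ) (Λ : Matrix (Fin m) (Fin m) ℝ) (ρ : ℝ)
    (x : Fin n → ℝ) (w : Fin m → ℝ) :
    Sum.elim x w ⬝ᵥ ((Matrix.fromBlocks (𝒜ᵀ * P * 𝒜 - ρ ^ 2 • P) (𝒜ᵀ * P * ℬ)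
        (ℬᵀ * P * 𝒜) (ℬᵀ * P * ℬ) +
      (Matrix.fromBlocks 𝒞 𝒟 0 (1 : Matrix (Fin m) (Fin m) ℝ))ᵀ * (Matrix.fromBlocks Λ 0 0 (-Λ)) *
        (Matrix.fromBlocks 𝒞 𝒟 0 (1 : Matrix (Fin m) (Fin m) ℝ))) *ᵥ Sum.elim x w) =
    (𝒜 *ᵥ x + ℬ *ᵥ w) ⬝ᵥ (P *ᵥ (𝒜 *ᵥ x + ℬ *ᵥ w)) - ρ ^ 2 * (x ⬝ᵥ (P *ᵥ x))
      + ((𝒞 *ᵥ x + 𝒟 *ᵥ w) ⬝ᵥ (Λ *ᵥ (𝒞 *ᵥ x + 𝒟 *ᵥ w)) - w ⬝ᵥ (Λ *ᵥ w)) := by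
  have hG : (Matrix.fromBlocks 𝒞 𝒟 0 (1 : Matrix (Fin m) (Fin m) ℝ)) *ᵥ Sum.elim x w
      = Sum.elim (𝒞 *ᵥ x + 𝒟 *ᵥ w) w := by
    simp [Matrix.fromBlocks_mulVec]
  have hblock2 : Sum.elim x w ⬝ᵥ (((Matrix.fromBlocks 𝒞 𝒟 0 (1 : Matrix (Fin m) (Fin m) ℝ))ᵀ *
      (Matrix.fromBlocks Λ 0 0 (-Λ)) * (Matrix.fromBlocks 𝒞 𝒟 0 (1 : Matrix (Fin m) (Fin m) ℝ))) *ᵥ Sum.elim x w)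
      = (𝒞 *ᵥ x + 𝒟 *ᵥ w) ⬝ᵥ (Λ *ᵥ (𝒞 *ᵥ x + 𝒟 *ᵥ w)) - w ⬝ᵥ (Λ *ᵥ w) := by
    rw [← Matrix.mulVec_mulVec, ← Matrix.mulVec_mulVec, Matrix.dotProduct_mulVec,
      Matrix.vecMul_transpose, hG, Matrix.fromBlocks_mulVec]
    simp [sumElim_dotProduct_sumElim, Matrix.neg_mulVec, sub_eq_add_neg]
  rw [Matrix.add_mulVec, dotProduct_add, hblock2, Matrix.fromBlocks_mulVec,
    sumElim_dotProduct_sumElim]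
  have e1 : x ⬝ᵥ ((𝒜ᵀ * P * 𝒜) *ᵥ x) = (𝒜 *ᵥ x) ⬝ᵥ (P *ᵥ (𝒜 *ᵥ x)) := by
    rw [← Matrix.mulVec_mulVec, ← Matrix.mulVec_mulVec, Matrix.dotProduct_mulVec,
      Matrix.vecMul_transpose]
  have e2 : x ⬝ᵥ ((𝒜ᵀ * P * ℬ) *ᵥ w) = (𝒜 *ᵥ x) ⬝ᵥ (P *ᵥ (ℬ *ᵥ w)) := by
    rw [← Matrix.mulVec_mulVec, ← Matrix.mulVec_mulVec, Matrix.dotProduct_mulVec,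
      Matrix.vecMul_transpose]
  have e3 : w ⬝ᵥ ((ℬᵀ * P * 𝒜) *ᵥ x) = (ℬ *ᵥ w) ⬝ᵥ (P *ᵥ (𝒜 *ᵥ x)) := by
    rw [← Matrix.mulVec_mulVec, ← Matrix.mulVec_mulVec, Matrix.dotProduct_mulVec,
      Matrix.vecMul_transpose]
  have e4 : w ⬝ᵥ ((ℬᵀ * P * ℬ) *ᵥ w) = (ℬ *ᵥ w) ⬝ᵥ (P *ᵥ (ℬ *ᵥ w)) := by
    rw [← Matrix.mulVec_mulVec, ← Matrix.mulVec_mulVec, Matrix.dotProduct_mulVec,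
      Matrix.vecMul_transpose]
  simp only [Sum.elim_comp_inl, Sum.elim_comp_inr, dotProduct_add, dotProduct_sub,
    Matrix.sub_mulVec, Matrix.smul_mulVec, dotProduct_smul, e1, e2, e3, e4,
    Matrix.mulVec_add, add_dotProduct, smul_eq_mul]
  ring

/-- the Lyapunov LMI together with the elementwise `[-1, 1]` sector bound
on the nonlinearity implies exponential stability of the origin of the closed loop
with rate `ρ` and overshoot `√(λ_max(P)/λ_min(P))`. -/
theorem lyapunov_lmi_implies_exponential_stability
    (n m : ℕ)
    (𝒜 : Matrix (Fin n) (Fin n) ℝ) (ℬ : Matrix (Fin n) (Fin m) ℝ)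
    (𝒞 : Matrix (Fin m) (Fin n) ℝ) (𝒟 : Matrix (Fin m) (Fin m) ℝ)
    (φs : Fin m → ℝ → ℝ) (hsector : ∀ i, ∀ ν : ℝ, (φs i ν) ^ 2 ≤ ν ^ 2)
    (φt : (Fin m → ℝ) → (Fin m → ℝ)) (hφt : ∀ v i, φt v i = φs i (v i))
    (ζ : ℕ → Fin n → ℝ) (v z : ℕ → Fin m → ℝ)
    (hdyn : ∀ k, ζ (k + 1) = 𝒜 *ᵥ ζ k + ℬ *ᵥ z k)
    (hout : ∀ k, v k = 𝒞 *ᵥ ζ k + 𝒟 *ᵥ z k)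
    (hnl : ∀ k, z k = φt (v k))
    (P : Matrix (Fin n) (Fin n) ℝ) (hP : P.PosDef)
    (Λ : Matrix (Fin m) (Fin m) ℝ)
    (hΛdiag : ∀ i j, i ≠ j → Λ i j = 0) (hΛ : Λ.PosDef)
    (ρ : ℝ) (hρ0 : 0 ≤ ρ) (hρ1 : ρ < 1)
    (hLMI : (-(Matrix.fromBlocks (𝒜ᵀ * P * 𝒜 - ρ ^ 2 • P) (𝒜ᵀ * P * ℬ)
        (ℬᵀ * P * 𝒜) (ℬᵀ * P * ℬ) +
      (Matrix.fromBlocks 𝒞 𝒟 0 (1 : Matrix (Fin m) (Fin m) ℝ))ᵀ * (Matrix.fromBlocks Λ 0 0 (-Λ)) *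
        (Matrix.fromBlocks 𝒞 𝒟 0 (1 : Matrix (Fin m) (Fin m) ℝ)))).PosDef) :
    ∀ k : ℕ, Real.sqrt (∑ i, ζ k i ^ 2) ≤
      Real.sqrt ((⨆ i, hP.1.eigenvalues i) / (⨅ i, hP.1.eigenvalues i)) * ρ ^ k *
        Real.sqrt (∑ i, ζ 0 i ^ 2) := by
  -- the Lyapunov function
  set V : ℕ → ℝ := fun k => ζ k ⬝ᵥ (P *ᵥ ζ k) with hV
  -- diagonal quadratic form
  have hdiagquad : ∀ u : Fin m → ℝ, u ⬝ᵥ (Λ *ᵥ u) = ∑ i, Λ i i * u i ^ 2 := by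
    intro u
    simp only [dotProduct, mulVec]
    refine Finset.sum_congr rfl fun i _ => ?_
    have : ∑ x, Λ i x * u x = Λ i i * u i :=
      Finset.sum_eq_single i (fun j _ hj => by rw [hΛdiag i j (Ne.symm hj), zero_mul])
        (fun h => absurd (Finset.mem_univ i) h)
    rw [this]; ring
  have hΛpos : ∀ i, 0 < Λ i i := by
    intro i
    have h := hΛ.dotProduct_mulVec_pos (x := Pi.single i 1) (by
      intro h0
      have := congrFun h0 i
      simp at this)
    have : star (Pi.single i (1:ℝ)) ⬝ᵥ (Λ *ᵥ Pi.single i 1) = Λ i i := by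
      simp [dotProduct, mulVec, Pi.single_apply, Finset.sum_ite_eq, Finset.sum_ite_eq']
    rwa [this] at h
  -- the decrease of the Lyapunov function
  have hstep : ∀ k, V (k + 1) ≤ ρ ^ 2 * V k := by
    intro k
    have hsd := hLMI.posSemidef.dotProduct_mulVec_nonneg (Sum.elim (ζ k) (z k))
    rw [star_trivial, Matrix.neg_mulVec, dotProduct_neg] at hsd
    have hle : Sum.elim (ζ k) (z k) ⬝ᵥ ((Matrix.fromBlocks (𝒜ᵀ * P * 𝒜 - ρ ^ 2 • P)
        (𝒜ᵀ * P * ℬ) (ℬᵀ * P * 𝒜) (ℬᵀ * P * ℬ) +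
      (Matrix.fromBlocks 𝒞 𝒟 0 (1 : Matrix (Fin m) (Fin m) ℝ))ᵀ * (Matrix.fromBlocks Λ 0 0 (-Λ)) *
        (Matrix.fromBlocks 𝒞 𝒟 0 (1 : Matrix (Fin m) (Fin m) ℝ))) *ᵥ Sum.elim (ζ k) (z k)) ≤ 0 := by linarith
    rw [lmi_expand'] at hle
    have hsector' : 0 ≤ v k ⬝ᵥ (Λ *ᵥ v k) - z k ⬝ᵥ (Λ *ᵥ z k) := by
      rw [hdiagquad, hdiagquad, ← Finset.sum_sub_distrib]
      refine Finset.sum_nonneg fun i _ => ?_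
      rw [← mul_sub]
      refine mul_nonneg (hΛpos i).le (sub_nonneg.mpr ?_)
      rw [hnl k, hφt]
      exact hsector i (v k i)
    rw [← hout k] at hle
    rw [hV]
    simp only
    rw [hdyn k]
    nlinarith [hle, hsector']
  -- iterate
  have hiter : ∀ k, V k ≤ (ρ ^ 2) ^ k * V 0 := by
    intro k
    induction k with
    | zero => simp
    | succ k ih =>
      calc V (k + 1) ≤ ρ ^ 2 * V k := hstep k
        _ ≤ ρ ^ 2 * ((ρ ^ 2) ^ k * V 0) := by
            exact mul_le_mul_of_nonneg_left ih (by positivity)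
        _ = (ρ ^ 2) ^ (k + 1) * V 0 := by ring
  intro k
  rcases isEmpty_or_nonempty (Fin n) with he | he
  · simp [Finset.univ_eq_empty]
  · set f := hP.1.eigenvalues with hf
    set lM := ⨆ i, f i with hlM
    set lm := ⨅ i, f i with hlm
    have hbddA : BddAbove (Set.range f) := Set.Finite.bddAbove (Set.finite_range f)
    have hbddB : BddBelow (Set.range f) := Set.Finite.bddBelow (Set.finite_range f)
    obtain ⟨i0, _, hi0⟩ := Finset.exists_min_image Finset.univ f ⟨Classical.arbitrary _,
      Finset.mem_univ _⟩
    have hlm_eq : lm = f i0 := le_antisymm (ciInf_le hbddB i0)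
      (le_ciInf fun j => hi0 j (Finset.mem_univ j))
    have hlmpos : 0 < lm := hlm_eq ▸ hP.eigenvalues_pos i0
    have hlmle : ∀ i, lm ≤ f i := fun i => ciInf_le hbddB i
    have hlMge : ∀ i, f i ≤ lM := fun i => le_ciSup hbddA i
    -- lower bound
    have hlow : lm * ∑ i, ζ k i ^ 2 ≤ V k := by
      obtain ⟨h1, h2⟩ := rayleigh_aux' hP.1 (ζ k)
      rw [hV]; simp only
      rw [h1, h2, Finset.mul_sum]
      exact Finset.sum_le_sum fun i _ =>
        mul_le_mul_of_nonneg_right (hlmle i) (sq_nonneg _)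
    -- upper bound
    have hup : V 0 ≤ lM * ∑ i, ζ 0 i ^ 2 := by
      obtain ⟨h1, h2⟩ := rayleigh_aux' hP.1 (ζ 0)
      rw [hV]; simp only
      rw [h1, h2, Finset.mul_sum]
      exact Finset.sum_le_sum fun i _ =>
        mul_le_mul_of_nonneg_right (hlMge i) (sq_nonneg _)
    have hz0 : (0:ℝ) ≤ ∑ i, ζ 0 i ^ 2 := Finset.sum_nonneg fun i _ => sq_nonneg _
    have key : ∑ i, ζ k i ^ 2 ≤ lM / lm * (ρ ^ k) ^ 2 * ∑ i, ζ 0 i ^ 2 := by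
      have h3 : (ρ ^ 2) ^ k * V 0 ≤ (ρ ^ 2) ^ k * (lM * ∑ i, ζ 0 i ^ 2) :=
        mul_le_mul_of_nonneg_left hup (by positivity)
      have h4 : lm * ∑ i, ζ k i ^ 2 ≤ (ρ ^ 2) ^ k * (lM * ∑ i, ζ 0 i ^ 2) :=
        le_trans hlow (le_trans (hiter k) h3)
      rw [div_mul_eq_mul_div, div_mul_eq_mul_div, le_div_iff₀ hlmpos]
      calc (∑ i, ζ k i ^ 2) * lm = lm * ∑ i, ζ k i ^ 2 := by ring
        _ ≤ (ρ ^ 2) ^ k * (lM * ∑ i, ζ 0 i ^ 2) := h4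
        _ = lM * (ρ ^ k) ^ 2 * ∑ i, ζ 0 i ^ 2 := by ring
    have hdivnn : (0:ℝ) ≤ lM / lm :=
      div_nonneg (le_trans hlmpos.le (le_trans (hlmle i0) (hlMge i0))) hlmpos.le
    calc Real.sqrt (∑ i, ζ k i ^ 2) ≤
        Real.sqrt (lM / lm * (ρ ^ k) ^ 2 * ∑ i, ζ 0 i ^ 2) := Real.sqrt_le_sqrt key
      _ = Real.sqrt (lM / lm) * ρ ^ k * Real.sqrt (∑ i, ζ 0 i ^ 2) := by
          rw [Real.sqrt_mul (by positivity), Real.sqrt_mul hdivnn,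
            Real.sqrt_sq (pow_nonneg hρ0 k)]
end

section
/- Let φ̃: ℝ^m → ℝ^m act elementwise, φ̃(v)_i = φ̃_i(v_i), where each φ̃_i: ℝ → ℝ is differentiable with φ̃_i′(x) ∈ [−1, 1] for all x. Let Λ ∈ ℝ^{m×m} be diagonal positive definite and 𝒟 ∈ ℝ^{m×m} satisfy 𝒟ᵀΛ𝒟 ≺ Λ. Then for every c ∈ ℝ^m, the map z ↦ φ̃(𝒟z + c) is a contraction on ℝ^m with respect to the norm ‖x‖_Λ = ‖Λ^{1/2}x‖, and hence there exists a unique z ∈ ℝ^m satisfying z = φ̃(𝒟z + c). -/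
open Matrix

/-- The weighted norm `‖x‖_Λ = ‖Λ^{1/2} x‖`, where `Λ^{1/2}` is the diagonal matrix of
square roots of the diagonal entries of `Λ` and `‖·‖` is the Euclidean norm. -/
noncomputable def lamNorm {m : ℕ} (Λ : Matrix (Fin m) (Fin m) ℝ) (x : Fin m → ℝ) : ℝ :=
  Real.sqrt (∑ i, ((Matrix.diagonal fun j => Real.sqrt (Λ j j)) *ᵥ x) i ^ 2)

lemma lamNorm_eq' {m : ℕ} (Λ : Matrix (Fin m) (Fin m) ℝ) (x : Fin m → ℝ) :
    lamNorm Λ x = Real.sqrt (∑ i, (Real.sqrt (Λ i i) * x i) ^ 2) := by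
  simp [lamNorm, mulVec_diagonal]

lemma lamNorm_nonneg' {m : ℕ} (Λ : Matrix (Fin m) (Fin m) ℝ) (x : Fin m → ℝ) :
    0 ≤ lamNorm Λ x := Real.sqrt_nonneg _

/-- For diagonal Λ with nonnegative diagonal, `lamNorm Λ x ^ 2 = x ⬝ᵥ Λ *ᵥ x`. -/
lemma lamNorm_sq {m : ℕ} (Λ : Matrix (Fin m) (Fin m) ℝ)
    (hΛdiag : ∀ i j, i ≠ j → Λ i j = 0) (hΛii : ∀ i, 0 ≤ Λ i i) (x : Fin m → ℝ) :
    lamNorm Λ x ^ 2 = x ⬝ᵥ (Λ *ᵥ x) := by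
  rw [lamNorm_eq', Real.sq_sqrt]
  · unfold dotProduct mulVec dotProduct
    apply Finset.sum_congr rfl
    intro i _
    rw [Finset.sum_eq_single i]
    · rw [mul_pow, Real.sq_sqrt (hΛii i)]; ring
    · intro j _ hj; simp [hΛdiag i j (Ne.symm hj)]
    · intro h; exact absurd (Finset.mem_univ i) h
  · exact Finset.sum_nonneg fun i _ => sq_nonneg _

lemma lamNorm_eq_sqrt_quad {m : ℕ} (Λ : Matrix (Fin m) (Fin m) ℝ)
    (hΛdiag : ∀ i j, i ≠ j → Λ i j = 0) (hΛii : ∀ i, 0 ≤ Λ i i) (x : Fin m → ℝ) :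
    lamNorm Λ x = Real.sqrt (x ⬝ᵥ (Λ *ᵥ x)) := by
  rw [← lamNorm_sq Λ hΛdiag hΛii, Real.sqrt_sq (lamNorm_nonneg' Λ x)]

lemma lamNorm_zero_iff {m : ℕ} (Λ : Matrix (Fin m) (Fin m) ℝ)
    (hΛii : ∀ i, 0 < Λ i i) (x : Fin m → ℝ) (h : lamNorm Λ x = 0) : x = 0 := by
  rw [lamNorm_eq'] at h
  have hsum : ∑ i, (Real.sqrt (Λ i i) * x i) ^ 2 = 0 :=
    (Real.sqrt_eq_zero (Finset.sum_nonneg fun i _ => sq_nonneg _)).mp h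
  funext i
  have := (Finset.sum_eq_zero_iff_of_nonneg (fun i _ => sq_nonneg _)).mp hsum i
    (Finset.mem_univ i)
  have h2 : Real.sqrt (Λ i i) * x i = 0 := by
    exact (pow_eq_zero_iff two_ne_zero).mp this
  have hs : Real.sqrt (Λ i i) ≠ 0 := ne_of_gt (Real.sqrt_pos.mpr (hΛii i))
  simpa [hs] using h2

/-- Monotonicity of the weighted norm in absolute values of entries. -/
lemma lamNorm_mono {m : ℕ} (Λ : Matrix (Fin m) (Fin m) ℝ) (u v : Fin m → ℝ)
    (h : ∀ i, |u i| ≤ |v i|) : lamNorm Λ u ≤ lamNorm Λ v := by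
  rw [lamNorm_eq', lamNorm_eq']
  apply Real.sqrt_le_sqrt
  apply Finset.sum_le_sum
  intro i _
  rw [mul_pow, mul_pow]
  apply mul_le_mul_of_nonneg_left _ (sq_nonneg _)
  rw [← sq_abs (u i), ← sq_abs (v i)]
  exact pow_le_pow_left₀ (abs_nonneg _) (h i) 2

/-- for an elementwise slope-restricted (in `[-1,1]`) nonlinearity `φ̃`
and `𝒟ᵀΛ𝒟 ≺ Λ`, the map `z ↦ φ̃(𝒟z + c)` is a contraction in `‖·‖_Λ` and has a unique
fixed point. -/
theorem implicit_equation_wellposed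
    (m : ℕ) (φs : Fin m → ℝ → ℝ)
    (hdiff : ∀ i, Differentiable ℝ (φs i))
    (hslope : ∀ i, ∀ x : ℝ, deriv (φs i) x ∈ Set.Icc (-1 : ℝ) 1)
    (φt : (Fin m → ℝ) → (Fin m → ℝ)) (hφt : ∀ v i, φt v i = φs i (v i))
    (Λ : Matrix (Fin m) (Fin m) ℝ)
    (hΛdiag : ∀ i j, i ≠ j → Λ i j = 0) (hΛ : Λ.PosDef)
    (𝒟 : Matrix (Fin m) (Fin m) ℝ) (hD : (Λ - 𝒟ᵀ * Λ * 𝒟).PosDef) :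
    ∀ c : Fin m → ℝ,
      (∃ γ : ℝ, γ < 1 ∧ ∀ z₁ z₂ : Fin m → ℝ,
        lamNorm Λ (φt (𝒟 *ᵥ z₁ + c) - φt (𝒟 *ᵥ z₂ + c)) ≤ γ * lamNorm Λ (z₁ - z₂)) ∧
      (∃! z : Fin m → ℝ, z = φt (𝒟 *ᵥ z + c)) := by
  intro c
  -- positivity of diagonal entries
  have hΛii : ∀ i, 0 < Λ i i := by
    intro i
    have h := hΛ.dotProduct_mulVec_pos (x := Pi.single i 1)
      (by simp [Function.ne_iff])
    simpa [dotProduct, mulVec, Pi.single_apply, Finset.mul_sum] using h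
  have hΛii' : ∀ i, 0 ≤ Λ i i := fun i => (hΛii i).le
  -- each φs i is 1-Lipschitz
  have hlip : ∀ i, LipschitzWith 1 (φs i) := by
    intro i
    apply lipschitzWith_of_nnnorm_deriv_le (hdiff i)
    intro x
    rw [← NNReal.coe_le_coe, coe_nnnorm, Real.norm_eq_abs, NNReal.coe_one]
    exact abs_le.mpr ⟨(hslope i x).1, (hslope i x).2⟩
  have hlip' : ∀ i (a b : ℝ), |φs i a - φs i b| ≤ |a - b| := by
    intro i a b
    have := (hlip i).dist_le_mul a b
    simpa [Real.dist_eq] using this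
  -- the nonlinearity is 1-Lipschitz in lamNorm
  have hφ_norm : ∀ u v : Fin m → ℝ, lamNorm Λ (φt u - φt v) ≤ lamNorm Λ (u - v) := by
    intro u v
    apply lamNorm_mono
    intro i
    simp only [Pi.sub_apply, hφt]
    exact hlip' i (u i) (v i)
  -- quadratic forms
  have hquad : ∀ w : Fin m → ℝ,
      lamNorm Λ (𝒟 *ᵥ w) ^ 2 = w ⬝ᵥ ((𝒟ᵀ * Λ * 𝒟) *ᵥ w) := by
    intro w
    rw [lamNorm_sq Λ hΛdiag hΛii', ← mulVec_mulVec, ← mulVec_mulVec,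
      dotProduct_mulVec w, vecMul_transpose]
  -- existence of uniform contraction factor γ
  have hγ : ∃ γ : ℝ, 0 ≤ γ ∧ γ < 1 ∧
      ∀ w : Fin m → ℝ, lamNorm Λ (𝒟 *ᵥ w) ≤ γ * lamNorm Λ w := by
    rcases Nat.eq_zero_or_pos m with hm | hm
    · refine ⟨0, le_refl 0, by norm_num, ?_⟩
      intro w
      subst hm
      have : (𝒟 *ᵥ w) = (fun i : Fin 0 => i.elim0) := by funext i; exact i.elim0
      simp [lamNorm, this]
    · -- continuous quadratic forms on the unit sphere
      have : Nontrivial (Fin m → ℝ) := by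
        have : Nonempty (Fin m) := ⟨⟨0, hm⟩⟩
        infer_instance
      have hcont : ∀ M : Matrix (Fin m) (Fin m) ℝ,
          Continuous fun w : Fin m → ℝ => w ⬝ᵥ (M *ᵥ w) := by
        intro M
        simp only [dotProduct, mulVec]
        exact continuous_finset_sum _ fun i _ => (continuous_apply i).mul
          (continuous_finset_sum _ fun j _ => continuous_const.mul (continuous_apply j))
      have hSc : IsCompact (Metric.sphere (0 : Fin m → ℝ) 1) := isCompact_sphere 0 1
      have hSne : (Metric.sphere (0 : Fin m → ℝ) 1).Nonempty :=
        NormedSpace.sphere_nonempty.mpr zero_le_one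
      have hSnz : ∀ w ∈ Metric.sphere (0 : Fin m → ℝ) 1, w ≠ 0 := by
        intro w hw
        have h1 : ‖w‖ = 1 := by
          rw [Metric.mem_sphere, dist_eq_norm, sub_zero] at hw; exact hw
        intro h0
        rw [h0] at h1; simp at h1
      set A : Matrix (Fin m) (Fin m) ℝ := Λ - 𝒟ᵀ * Λ * 𝒟 with hA
      obtain ⟨w₀, hw₀S, hw₀min⟩ :=
        hSc.exists_isMinOn hSne ((hcont A).continuousOn)
      obtain ⟨w₁, hw₁S, hw₁max⟩ :=
        hSc.exists_isMaxOn hSne ((hcont Λ).continuousOn)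
      set ε : ℝ := w₀ ⬝ᵥ (A *ᵥ w₀) with hε
      set C : ℝ := w₁ ⬝ᵥ (Λ *ᵥ w₁) with hC
      have hεpos : 0 < ε := by
        have := hD.dotProduct_mulVec_pos (hSnz w₀ hw₀S); rwa [star_trivial] at this
      have hCpos : 0 < C := by
        have := hΛ.dotProduct_mulVec_pos (hSnz w₁ hw₁S); rwa [star_trivial] at this
      -- on the sphere: QD u ≤ (1 - ε/C) * Q u
      have hsphere : ∀ u ∈ Metric.sphere (0 : Fin m → ℝ) 1,
          u ⬝ᵥ ((𝒟ᵀ * Λ * 𝒟) *ᵥ u) ≤ (1 - ε / C) * (u ⬝ᵥ (Λ *ᵥ u)) := by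
        intro u huS
        have h1 : ε ≤ u ⬝ᵥ (A *ᵥ u) := hw₀min huS
        have h2 : u ⬝ᵥ (Λ *ᵥ u) ≤ C := hw₁max huS
        have h3 : u ⬝ᵥ (A *ᵥ u) = u ⬝ᵥ (Λ *ᵥ u) - u ⬝ᵥ ((𝒟ᵀ * Λ * 𝒟) *ᵥ u) := by
          rw [hA, sub_mulVec, dotProduct_sub]
        have hQpos : 0 ≤ u ⬝ᵥ (Λ *ᵥ u) := by
          rw [← lamNorm_sq Λ hΛdiag hΛii']; exact sq_nonneg _
        have h4 : (ε / C) * (u ⬝ᵥ (Λ *ᵥ u)) ≤ ε := by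
          have := mul_le_mul_of_nonneg_left h2 (le_of_lt (div_pos hεpos hCpos))
          calc (ε / C) * (u ⬝ᵥ (Λ *ᵥ u)) ≤ (ε / C) * C := this
            _ = ε := div_mul_cancel₀ ε (ne_of_gt hCpos)
        nlinarith [h1, h3, h4]
      have hεC1 : ε / C ≤ 1 := by
        have h1 : ε ≤ w₀ ⬝ᵥ (Λ *ᵥ w₀) - w₀ ⬝ᵥ ((𝒟ᵀ * Λ * 𝒟) *ᵥ w₀) := by
          rw [hε, hA, sub_mulVec, dotProduct_sub]
        have h2 : 0 ≤ w₀ ⬝ᵥ ((𝒟ᵀ * Λ * 𝒟) *ᵥ w₀) := by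
          rw [← hquad]; exact sq_nonneg _
        have h3 : w₀ ⬝ᵥ (Λ *ᵥ w₀) ≤ C := hw₁max hw₀S
        rw [div_le_one hCpos]; linarith
      refine ⟨Real.sqrt (1 - ε / C), Real.sqrt_nonneg _, ?_, ?_⟩
      · have : 1 - ε / C < 1 := by
          have := div_pos hεpos hCpos; linarith
        calc Real.sqrt (1 - ε / C) < Real.sqrt 1 := by
              apply Real.sqrt_lt_sqrt; linarith; exact this
          _ = 1 := Real.sqrt_one
      · intro w
        by_cases hw : w = 0
        · subst hw
          simp only [mulVec_zero]
          have h0 : lamNorm Λ (0 : Fin m → ℝ) = 0 := by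
            simp [lamNorm]
          rw [h0, mul_zero]
        · -- scale to sphere
          set t : ℝ := ‖w‖ with ht
          have htpos : 0 < t := norm_pos_iff.mpr hw
          set u : Fin m → ℝ := t⁻¹ • w with hu
          have huS : u ∈ Metric.sphere (0 : Fin m → ℝ) 1 := by
            rw [Metric.mem_sphere, dist_eq_norm, sub_zero, hu, norm_smul,
              Real.norm_eq_abs, abs_inv, abs_of_pos htpos]
            field_simp
            exact ht.symm
          have hwu : w = t • u := by
            rw [hu, smul_smul, mul_inv_cancel₀ (ne_of_gt htpos), one_smul]
          have hsc : ∀ M : Matrix (Fin m) (Fin m) ℝ,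
              w ⬝ᵥ (M *ᵥ w) = t ^ 2 * (u ⬝ᵥ (M *ᵥ u)) := by
            intro M
            conv_lhs => rw [hwu]
            rw [mulVec_smul, dotProduct_smul, smul_dotProduct, smul_eq_mul,
              smul_eq_mul]
            ring
          have key : w ⬝ᵥ ((𝒟ᵀ * Λ * 𝒟) *ᵥ w) ≤ (1 - ε / C) * (w ⬝ᵥ (Λ *ᵥ w)) := by
            rw [hsc, hsc]
            have := hsphere u huS
            nlinarith [sq_nonneg t]
          have hQw : 0 ≤ w ⬝ᵥ (Λ *ᵥ w) := by
            rw [← lamNorm_sq Λ hΛdiag hΛii']; exact sq_nonneg _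
          rw [lamNorm_eq_sqrt_quad Λ hΛdiag hΛii' w]
          have : lamNorm Λ (𝒟 *ᵥ w) = Real.sqrt (w ⬝ᵥ ((𝒟ᵀ * Λ * 𝒟) *ᵥ w)) := by
            rw [← hquad, Real.sqrt_sq (lamNorm_nonneg' Λ _)]
          rw [this, ← Real.sqrt_mul (by linarith : (0:ℝ) ≤ 1 - ε / C) (w ⬝ᵥ (Λ *ᵥ w))]
          exact Real.sqrt_le_sqrt key
  obtain ⟨γ, hγ0, hγ1, hγbound⟩ := hγ
  -- the contraction bound
  set f : (Fin m → ℝ) → (Fin m → ℝ) := fun z => φt (𝒟 *ᵥ z + c) with hf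
  have hcontract : ∀ z₁ z₂ : Fin m → ℝ,
      lamNorm Λ (f z₁ - f z₂) ≤ γ * lamNorm Λ (z₁ - z₂) := by
    intro z₁ z₂
    calc lamNorm Λ (f z₁ - f z₂)
        ≤ lamNorm Λ ((𝒟 *ᵥ z₁ + c) - (𝒟 *ᵥ z₂ + c)) := hφ_norm _ _
      _ = lamNorm Λ (𝒟 *ᵥ (z₁ - z₂)) := by
          congr 1
          rw [mulVec_sub]
          abel
      _ ≤ γ * lamNorm Λ (z₁ - z₂) := hγbound _
  refine ⟨⟨γ, hγ1, hcontract⟩, ?_⟩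
  -- existence via Banach fixed point on Euclidean space
  set s : Fin m → ℝ := fun i => Real.sqrt (Λ i i) with hs
  have hspos : ∀ i, 0 < s i := fun i => Real.sqrt_pos.mpr (hΛii i)
  have hsne : ∀ i, s i ≠ 0 := fun i => ne_of_gt (hspos i)
  set Sm : Matrix (Fin m) (Fin m) ℝ := diagonal s with hSm
  set Sinv : Matrix (Fin m) (Fin m) ℝ := diagonal (fun i => (s i)⁻¹) with hSinv
  have hSSinv : ∀ v : Fin m → ℝ, Sm *ᵥ (Sinv *ᵥ v) = v := by
    intro v
    rw [hSm, hSinv, mulVec_mulVec, diagonal_mul_diagonal,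
      show (fun i => s i * (s i)⁻¹) = fun _ => (1:ℝ) from
        funext fun i => mul_inv_cancel₀ (hsne i)]
    simp
  have hSinvS : ∀ v : Fin m → ℝ, Sinv *ᵥ (Sm *ᵥ v) = v := by
    intro v
    rw [hSm, hSinv, mulVec_mulVec, diagonal_mul_diagonal,
      show (fun i => (s i)⁻¹ * s i) = fun _ => (1:ℝ) from
        funext fun i => inv_mul_cancel₀ (hsne i)]
    simp
  set e := WithLp.equiv 2 (Fin m → ℝ) with he
  have hnorm : ∀ v : Fin m → ℝ, ‖e.symm v‖ = lamNorm Λ (Sinv *ᵥ v) := by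
    intro v
    rw [EuclideanSpace.norm_eq, lamNorm_eq']
    congr 1
    apply Finset.sum_congr rfl
    intro i _
    rw [show (e.symm v) i = v i from rfl, Real.norm_eq_abs, sq_abs]
    congr 1
    rw [hSinv, mulVec_diagonal, ← mul_assoc, mul_inv_cancel₀ (hsne i), one_mul]
  have hnorm' : ∀ v : Fin m → ℝ, ‖e.symm (Sm *ᵥ v)‖ = lamNorm Λ v := by
    intro v
    rw [hnorm, hSinvS]
  set g : EuclideanSpace ℝ (Fin m) → EuclideanSpace ℝ (Fin m) :=
    fun x => e.symm (Sm *ᵥ f (Sinv *ᵥ (e x))) with hg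
  have hgdist : ∀ x y : EuclideanSpace ℝ (Fin m),
      dist (g x) (g y) ≤ γ * dist x y := by
    intro x y
    rw [dist_eq_norm, dist_eq_norm]
    have h1 : g x - g y = e.symm (Sm *ᵥ (f (Sinv *ᵥ (e x)) - f (Sinv *ᵥ (e y)))) := by
      rw [hg]
      simp only [mulVec_sub]
      rfl
    have h2 : x - y = e.symm (Sm *ᵥ (Sinv *ᵥ (e x - e y))) := by
      rw [hSSinv]
      rfl
    rw [h1, h2, hnorm', hnorm']
    have h3 : Sinv *ᵥ (e x - e y) = Sinv *ᵥ (e x) - Sinv *ᵥ (e y) := mulVec_sub _ _ _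
    rw [h3]
    exact hcontract _ _
  have hK1 : γ.toNNReal < 1 := by
    rw [← NNReal.coe_lt_coe, Real.coe_toNNReal γ hγ0, NNReal.coe_one]
    exact hγ1
  have hglip : LipschitzWith γ.toNNReal g := by
    apply LipschitzWith.of_dist_le_mul
    intro x y
    rw [Real.coe_toNNReal γ hγ0]
    exact hgdist x y
  have hCg : ContractingWith γ.toNNReal g := ⟨hK1, hglip⟩
  have : Nonempty (EuclideanSpace ℝ (Fin m)) := ⟨0⟩
  set x₀ := hCg.fixedPoint g with hx₀
  have hx₀fix : g x₀ = x₀ := hCg.fixedPoint_isFixedPt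
  set z₀ : Fin m → ℝ := Sinv *ᵥ (e x₀) with hz₀
  have hz₀fix : z₀ = f z₀ := by
    have h1 : e (g x₀) = e x₀ := by rw [hx₀fix]
    have h2 : Sm *ᵥ f z₀ = e x₀ := by
      rw [← h1, hg]
      simp only [Equiv.apply_symm_apply]
      rfl
    calc z₀ = Sinv *ᵥ (e x₀) := hz₀
      _ = Sinv *ᵥ (Sm *ᵥ f z₀) := by rw [h2]
      _ = f z₀ := hSinvS _
  refine ⟨z₀, hz₀fix, ?_⟩
  -- uniqueness
  intro y hy
  have hdiff0 : lamNorm Λ (y - z₀) ≤ γ * lamNorm Λ (y - z₀) := by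
    have hfy : f y = y := hy.symm
    calc lamNorm Λ (y - z₀) = lamNorm Λ (f y - f z₀) := by rw [hfy, ← hz₀fix]
      _ ≤ γ * lamNorm Λ (y - z₀) := hcontract _ _
  have hzero : lamNorm Λ (y - z₀) = 0 := by
    by_contra hne
    have hpos : 0 < lamNorm Λ (y - z₀) :=
      lt_of_le_of_ne (lamNorm_nonneg' Λ _) (Ne.symm hne)
    nlinarith
  have := lamNorm_zero_iff Λ hΛii (y - z₀) hzero
  have : y - z₀ = 0 := this
  funext i
  have := congrFun this i
  simp only [Pi.sub_apply, Pi.zero_apply] at this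
  linarith
end

section
/- Let Λ ∈ ℝ^{m×m} be diagonal positive definite and 𝒟 ∈ ℝ^{m×m} satisfy 𝒟ᵀΛ𝒟 ≺ Λ. Then for every diagonal matrix J ∈ ℝ^{m×m} with all diagonal entries in [−1, 1], the matrix I − J𝒟 is invertible. -/
open Matrix

/-- if `𝒟ᵀΛ𝒟 ≺ Λ` with `Λ` diagonal positive definite, then `I - J𝒟`
is invertible for every diagonal `J` with entries in `[-1, 1]`. -/
theorem one_sub_JD_invertible
    (m : ℕ) (Λ : Matrix (Fin m) (Fin m) ℝ)
    (hΛdiag : ∀ i j, i ≠ j → Λ i j = 0) (hΛ : Λ.PosDef)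
    (𝒟 : Matrix (Fin m) (Fin m) ℝ) (hD : (Λ - 𝒟ᵀ * Λ * 𝒟).PosDef) :
    ∀ d : Fin m → ℝ, (∀ i, d i ∈ Set.Icc (-1 : ℝ) 1) →
      IsUnit (1 - Matrix.diagonal d * 𝒟) := by
  intro d hd
  rw [Matrix.isUnit_iff_isUnit_det, isUnit_iff_ne_zero]
  intro hdet
  obtain ⟨v, hv0, hveq⟩ := Matrix.exists_mulVec_eq_zero_iff.mpr hdet
  set w := 𝒟 *ᵥ v with hw
  have hvi : ∀ i, v i = d i * w i := by
    intro i
    have h := congrFun hveq i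
    simp only [Matrix.sub_mulVec, Matrix.one_mulVec, Pi.sub_apply, Pi.zero_apply,
      ← Matrix.mulVec_mulVec, ← hw, Matrix.mulVec_diagonal] at h
    linarith
  -- Λ is diagonal
  have hΛd : Λ = Matrix.diagonal (fun i => Λ i i) := by
    ext i j
    by_cases h : i = j
    · subst h; simp
    · simp [Matrix.diagonal, h, hΛdiag i j h]
  have hΛpos : ∀ i, 0 < Λ i i := by
    intro i
    have := hΛ.dotProduct_mulVec_pos (x := Pi.single i 1) (by
      intro h
      have := congrFun h i
      simp at this)
    simpa [Matrix.mulVec_single, dotProduct, Pi.single_apply,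
      Finset.sum_ite_eq'] using this
  have key := hD.dotProduct_mulVec_pos hv0
  rw [star_trivial] at key
  have hsplit : v ⬝ᵥ ((Λ - 𝒟ᵀ * Λ * 𝒟) *ᵥ v) =
      v ⬝ᵥ (Λ *ᵥ v) - w ⬝ᵥ (Λ *ᵥ w) := by
    rw [Matrix.sub_mulVec, dotProduct_sub]
    congr 1
    rw [← Matrix.mulVec_mulVec, ← Matrix.mulVec_mulVec, Matrix.dotProduct_mulVec,
      Matrix.vecMul_transpose, ← hw]
  have hle : v ⬝ᵥ (Λ *ᵥ v) ≤ w ⬝ᵥ (Λ *ᵥ w) := by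
    rw [hΛd]
    simp only [Matrix.mulVec_diagonal, dotProduct]
    apply Finset.sum_le_sum
    intro i _
    have hdi := hd i
    rw [Set.mem_Icc] at hdi
    have hd2 : d i ^ 2 ≤ 1 := by nlinarith [hdi.1, hdi.2]
    have := hΛpos i
    rw [hvi i]
    nlinarith [mul_nonneg (mul_nonneg (sub_nonneg.mpr hd2) this.le) (sq_nonneg (w i))]
  rw [hsplit] at key
  linarith
end

section
/- Let 𝒜 ∈ ℝ^{n×n}, ℬ ∈ ℝ^{n×m}, 𝒞 ∈ ℝ^{m×n}, 𝒟 ∈ ℝ^{m×m}, P ∈ ℝ^{n×n} symmetric positive definite, Λ ∈ ℝ^{m×m} diagonal positive definite, and ρ ∈ [0,1). Then the Lyapunov LMI [[𝒜ᵀP𝒜 − ρ²P, 𝒜ᵀPℬ], [ℬᵀP𝒜, ℬᵀPℬ]] + [[𝒞, 𝒟], [0, I]]ᵀ [[Λ, 0], [0, −Λ]] [[𝒞, 𝒟], [0, I]] ≺ 0 holds if and only if the 4×4 block matrix [[ρ²P, 0, 𝒜ᵀ, 𝒞ᵀ], [0, Λ, ℬᵀ, 𝒟ᵀ], [𝒜,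 ℬ, P⁻¹, 0], [𝒞, 𝒟, 0, Λ⁻¹]] is positive definite. -/
open Matrix

section aux
variable {m n : Type*} [Fintype m] [Fintype n] [DecidableEq n]

open scoped Matrix in
theorem posDef_fromBlocks₂₂_iff
    (A : Matrix m m ℝ) (B : Matrix m n ℝ) {D : Matrix n n ℝ} (hD : D.PosDef) [Invertible D] :
    (fromBlocks A B Bᴴ D).PosDef ↔ (A - B * D⁻¹ * Bᴴ).PosDef := by
  rw [posDef_iff_dotProduct_mulVec, posDef_iff_dotProduct_mulVec, Matrix.IsHermitian.fromBlocks₂₂ _ _ hD.1]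
  constructor
  · refine fun h => ⟨h.1, fun x hx => ?_⟩
    have hz : Sum.elim x (-((D⁻¹ * Bᴴ) *ᵥ x)) ≠ 0 := by
      intro h0
      exact hx (funext fun i => congrFun h0 (Sum.inl i))
    have := h.2 hz
    rw [dotProduct_mulVec, Matrix.schur_complement_eq₂₂ A B _ _ hD.1] at this
    rw [dotProduct_mulVec]
    simpa using this
  · refine fun h => ⟨h.1, fun z hz => ?_⟩
    rw [dotProduct_mulVec, ← Sum.elim_comp_inl_inr z,
      Matrix.schur_complement_eq₂₂ A B _ _ hD.1]
    by_cases hx : z ∘ Sum.inl = 0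
    · have hy : z ∘ Sum.inr ≠ 0 := by
        intro h0
        apply hz
        funext i
        cases i with
        | inl i => exact congrFun hx i
        | inr i => exact congrFun h0 i
      rw [hx]
      have := (posDef_iff_dotProduct_mulVec.mp hD).2 hy
      rw [dotProduct_mulVec] at this
      simpa using this
    · have h1 := (posSemidef_iff_dotProduct_mulVec.mp hD.posSemidef).2 ((D⁻¹ * Bᴴ) *ᵥ (z ∘ Sum.inl) + z ∘ Sum.inr)
      have h2 := h.2 hx
      rw [dotProduct_mulVec] at h1 h2
      linarith

end aux

/-- by the Schur complement (using `P ≻ 0`, `Λ ≻ 0`), the Lyapunov LMI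
is equivalent to positive definiteness of a 4×4 block matrix. -/
theorem lyapunov_lmi_iff_schur_block
    (n m : ℕ)
    (𝒜 : Matrix (Fin n) (Fin n) ℝ) (ℬ : Matrix (Fin n) (Fin m) ℝ)
    (𝒞 : Matrix (Fin m) (Fin n) ℝ) (𝒟 : Matrix (Fin m) (Fin m) ℝ)
    (P : Matrix (Fin n) (Fin n) ℝ) (hP : P.PosDef)
    (Λ : Matrix (Fin m) (Fin m) ℝ)
    (hΛdiag : ∀ i j, i ≠ j → Λ i j = 0) (hΛ : Λ.PosDef)
    (ρ : ℝ) (hρ0 : 0 ≤ ρ) (hρ1 : ρ < 1) :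
    (-(Matrix.fromBlocks (𝒜ᵀ * P * 𝒜 - ρ ^ 2 • P) (𝒜ᵀ * P * ℬ)
        (ℬᵀ * P * 𝒜) (ℬᵀ * P * ℬ) +
      (Matrix.fromBlocks 𝒞 𝒟 (0 : Matrix (Fin m) (Fin n) ℝ) 1)ᵀ * (Matrix.fromBlocks Λ 0 0 (-Λ)) *
        (Matrix.fromBlocks 𝒞 𝒟 0 1))).PosDef ↔
    (Matrix.fromBlocks
      (Matrix.fromBlocks (ρ ^ 2 • P) 0 0 Λ) (Matrix.fromBlocks 𝒜ᵀ 𝒞ᵀ ℬᵀ 𝒟ᵀ)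
      (Matrix.fromBlocks 𝒜 ℬ 𝒞 𝒟) (Matrix.fromBlocks P⁻¹ 0 0 Λ⁻¹)).PosDef := by
  classical
  set X : Matrix (Fin n ⊕ Fin m) (Fin n ⊕ Fin m) ℝ := fromBlocks (ρ ^ 2 • P) 0 0 Λ with hX
  set Y : Matrix (Fin n ⊕ Fin m) (Fin n ⊕ Fin m) ℝ := fromBlocks 𝒜 ℬ 𝒞 𝒟 with hY
  set D : Matrix (Fin n ⊕ Fin m) (Fin n ⊕ Fin m) ℝ := fromBlocks P⁻¹ 0 0 Λ⁻¹ with hD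
  have hDpd : D.PosDef := by
    have h0 : (fromBlocks (P⁻¹) (0 : Matrix (Fin n) (Fin m) ℝ) (0 : Matrix (Fin n) (Fin m) ℝ)ᴴ
        (Λ⁻¹)).PosDef := by
      haveI : Invertible (Λ⁻¹) := hΛ.inv.isUnit.invertible
      rw [posDef_fromBlocks₂₂_iff _ _ hΛ.inv]
      simpa using hP.inv
    simpa using h0
  haveI : Invertible D := hDpd.isUnit.invertible
  have hYt : fromBlocks 𝒜ᵀ 𝒞ᵀ ℬᵀ 𝒟ᵀ = Yᴴ := by
    rw [hY, Matrix.conjTranspose_eq_transpose_of_trivial, Matrix.fromBlocks_transpose]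
  have hDinv : D⁻¹ = fromBlocks P 0 0 Λ := by
    rw [hD, Matrix.inv_fromBlocks_zero₂₁_of_isUnit_iff _ _ _
      (iff_of_true hP.inv.isUnit hΛ.inv.isUnit)]
    rw [Matrix.nonsing_inv_nonsing_inv _ ((Matrix.isUnit_iff_isUnit_det _).1 hP.isUnit),
      Matrix.nonsing_inv_nonsing_inv _ ((Matrix.isUnit_iff_isUnit_det _).1 hΛ.isUnit)]
    simp
  have hYYt : Yᴴᴴ = Y := Matrix.conjTranspose_conjTranspose Y
  have key : X - Yᴴ * D⁻¹ * Yᴴᴴ =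
      -(Matrix.fromBlocks (𝒜ᵀ * P * 𝒜 - ρ ^ 2 • P) (𝒜ᵀ * P * ℬ)
        (ℬᵀ * P * 𝒜) (ℬᵀ * P * ℬ) +
      (Matrix.fromBlocks 𝒞 𝒟 (0 : Matrix (Fin m) (Fin n) ℝ) 1)ᵀ * (Matrix.fromBlocks Λ 0 0 (-Λ)) *
        (Matrix.fromBlocks 𝒞 𝒟 0 1)) := by
    rw [hYYt, hDinv, hX, hY, ← hYt]
    simp only [sub_eq_add_neg, Matrix.fromBlocks_transpose, Matrix.fromBlocks_multiply,
      Matrix.fromBlocks_neg, Matrix.fromBlocks_add, Matrix.transpose_zero, Matrix.transpose_one,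
      Matrix.mul_zero, Matrix.zero_mul, Matrix.mul_one, Matrix.one_mul, add_zero, zero_add,
      Matrix.neg_mul, Matrix.mul_neg, neg_neg, Matrix.mul_assoc]
    erw [Matrix.fromBlocks_multiply]
    simp only [Matrix.fromBlocks_neg, Matrix.fromBlocks_add, neg_zero, Matrix.mul_zero,
      Matrix.zero_mul, Matrix.mul_one, add_zero, zero_add, Matrix.neg_mul, Matrix.mul_assoc]
    congr 1 <;> abel
  rw [hYt, ← key,
    show (fromBlocks X Yᴴ Y D) = fromBlocks X Yᴴ Yᴴᴴ D by rw [hYYt]]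
  exact (posDef_fromBlocks₂₂_iff X Yᴴ hDpd).symm
end

section
/- (Losslessness of the convexification for linear plants.) Let plant matrices A_G ∈ ℝ^{n×n}, B_G ∈ ℝ^{n×n_u}, C_G ∈ ℝ^{n_y×n} and a rate ρ ∈ [0,1) be given, and set the controller state dimension n_ξ = n. Suppose there exist symmetric matrices X, Y ∈ ℝ^{n×n}, a diagonal positive definite Λ ∈ ℝ^{n_φ×n_φ}, and matrices N₁₁ ∈ ℝ^{n×n}, N₁₂ ∈ ℝ^{n×n_y}, N₂₁ ∈ ℝ^{n_u×n}, N₂₂ ∈ ℝ^{n_u×n_y}, N̂₁₂ ∈ ℝ^{n×n_φ}, N̂₂₁ ∈ ℝ^{n_φ×n}, D̃_{K1} ∈ ℝ^{n_u×n_φ}, D̂_{K3} ∈ ℝ^{n_φ×n_φ}, D̂_{K4} ∈ ℝ^{n_φ×n_y} such that, with T₁ = [[Y, I], [I, X]], T₂ = [[A_G Y + B_G N₂₁, A_G + B_G N₂₂ C_G], [N₁₁, X A_G + N₁₂ C_G]], T₃ = [[B_G D̃_{K1}], [N̂₁₂]], T₄ = [N̂₂₁, D̂_{K4} C_G], the 4×4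 block matrix [[ρ² T₁, 0, T₂ᵀ, T₄ᵀ], [0, Λ, T₃ᵀ, D̂_{K3}ᵀ], [T₂, T₃, T₁, 0], [T₄, D̂_{K3}, 0, Λ]] is positive definite. Assume further that U = X and V = X⁻¹ − Y are invertible. Define 𝒴 = [[Y, I], [Vᵀ, 0]], P = (𝒴ᵀ)⁻¹ T₁ 𝒴⁻¹, and recover controller matrices by [[Ã_K, B̃_{K2}], [C̃_{K1}, D̃_{K2}]] = [[U, X B_G], [0, I]]⁻¹ ([[N₁₁, N₁₂], [N₂₁, N₂₂]] − [[X A_G Y, 0], [0, 0]]) [[Vᵀ, 0], [C_G Y, I]]⁻¹, B̃_{K1} = U⁻¹(N̂₁₂ − X B_G D̃_{K1}), C̃_{K2} = Λ⁻¹(N̂₂₁ − D̂_{K4} C_G Y)(Vᵀ)⁻¹, D̃_{K3} = Λ⁻¹ D̂_{K3}, D̃_{K4} = Λ⁻¹ D̂_{K4}. Then P is symmetric positive definite and, with the closed-loop matrices 𝒜 = [[A_G + B_G D̃_{K2} C_G, B_G C̃_{K1}], [B̃_{K2} C_G, Ã_K]], ℬ = [[B_G D̃_{K1}], [B̃_{K1}]],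 𝒞 = [D̃_{K4} C_G, C̃_{K2}], 𝒟 = D̃_{K3}, the Lyapunov LMI [[𝒜ᵀP𝒜 − ρ²P, 𝒜ᵀPℬ], [ℬᵀP𝒜, ℬᵀPℬ]] + [[𝒞, 𝒟], [0, I]]ᵀ [[Λ, 0], [0, −Λ]] [[𝒞, 𝒟], [0, I]] ≺ 0 holds with this P and Λ. -/
open Matrix

set_option linter.unusedSectionVars false
variable {m p : Type*} [Fintype m] [DecidableEq m] [Fintype p] [DecidableEq p]

lemma my_posDef_conj {A : Matrix m m ℝ} (hA : A.PosDef) {W : Matrix m m ℝ}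
    (hW : IsUnit W) : (Wᵀ * A * W).PosDef := by
  rw [posDef_iff_dotProduct_mulVec]
  constructor
  · have := isHermitian_conjTranspose_mul_mul W hA.1
    rwa [conjTranspose_eq_transpose_of_trivial] at this
  · intro x hx
    have hWx : W *ᵥ x ≠ 0 := by
      intro h
      exact hx (Matrix.mulVec_injective_iff_isUnit.mpr hW (by simpa using h))
    have h2 := hA.dotProduct_mulVec_pos hWx
    rw [star_trivial] at h2 ⊢
    rwa [← Matrix.mulVec_mulVec, ← Matrix.mulVec_mulVec, dotProduct_mulVec,
      vecMul_transpose]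

lemma my_posDef_blocks₁₁ {A : Matrix m m ℝ} {B : Matrix m p ℝ} {C : Matrix p m ℝ}
    {D : Matrix p p ℝ} (h : (fromBlocks A B C D).PosDef) : A.PosDef := by
  rw [posDef_iff_dotProduct_mulVec]
  constructor
  · exact (isHermitian_fromBlocks_iff.mp h.1).1
  · intro x hx
    have hne : (Sum.elim x 0 : m ⊕ p → ℝ) ≠ 0 := by
      intro hc; apply hx; funext i; exact congrFun hc (Sum.inl i)
    have := h.dotProduct_mulVec_pos hne
    simpa [star_trivial, fromBlocks_mulVec, sumElim_dotProduct_sumElim] using this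

lemma my_posDef_blocks₂₂ {A : Matrix m m ℝ} {B : Matrix m p ℝ} {C : Matrix p m ℝ}
    {D : Matrix p p ℝ} (h : (fromBlocks A B C D).PosDef) : D.PosDef := by
  rw [posDef_iff_dotProduct_mulVec]
  constructor
  · exact (isHermitian_fromBlocks_iff.mp h.1).2.2.2
  · intro x hx
    have hne : (Sum.elim 0 x : m ⊕ p → ℝ) ≠ 0 := by
      intro hc; apply hx; funext i; exact congrFun hc (Sum.inr i)
    have := h.dotProduct_mulVec_pos hne
    simpa [star_trivial, fromBlocks_mulVec, sumElim_dotProduct_sumElim] using this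

lemma my_posDef_fromBlocks_diag {A : Matrix m m ℝ} {D : Matrix p p ℝ}
    (hA : A.PosDef) (hD : D.PosDef) : (fromBlocks A 0 0 D).PosDef := by
  rw [posDef_iff_dotProduct_mulVec]
  constructor
  · exact isHermitian_fromBlocks_iff.mpr ⟨hA.1, by simp, by simp, hD.1⟩
  · intro x hx
    rw [← Sum.elim_comp_inl_inr x]
    have hor : x ∘ Sum.inl ≠ 0 ∨ x ∘ Sum.inr ≠ 0 := by
      by_contra hc
      push_neg at hc
      apply hx
      rw [← Sum.elim_comp_inl_inr x, hc.1, hc.2]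
      simp
    rw [star_trivial, fromBlocks_mulVec, sumElim_dotProduct_sumElim]
    simp only [Matrix.zero_mulVec, add_zero, zero_add]
    simp only [Sum.elim_comp_inl, Sum.elim_comp_inr]
    rcases hor with h1 | h1
    · exact add_pos_of_pos_of_nonneg (hA.dotProduct_mulVec_pos h1) (hD.posSemidef.dotProduct_mulVec_nonneg _)
    · exact add_pos_of_nonneg_of_pos (hA.posSemidef.dotProduct_mulVec_nonneg _) (hD.dotProduct_mulVec_pos h1)

lemma my_posDef_schur {A : Matrix m m ℝ} {B : Matrix m p ℝ} {D : Matrix p p ℝ}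
    (hD : D.PosDef) (h : (fromBlocks A B Bᵀ D).PosDef) :
    (A - B * D⁻¹ * Bᵀ).PosDef := by
  have hBt : Bᵀ = Bᴴ := (conjTranspose_eq_transpose_of_trivial B).symm
  rw [hBt] at h ⊢
  have hDinv : Invertible D := hD.isUnit.invertible
  rw [posDef_iff_dotProduct_mulVec]
  constructor
  · exact (IsHermitian.fromBlocks₂₂ A B hD.1).mp h.1
  · intro x hx
    set y : p → ℝ := -((D⁻¹ * Bᴴ) *ᵥ x) with hy
    have hne : (Sum.elim x y : m ⊕ p → ℝ) ≠ 0 := by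
      intro hc; apply hx; funext i; exact congrFun hc (Sum.inl i)
    have key := h.dotProduct_mulVec_pos hne
    rw [dotProduct_mulVec, schur_complement_eq₂₂ A B x y hD.1] at key
    simpa [hy, star_trivial, dotProduct_mulVec] using key

set_option linter.unusedVariables false

/-- losslessness of the convexification for linear plants. Feasibility of
the convex condition `LMI(θ̂)` yields, through the recovery of the controller parameters
`θ̃`, a Lyapunov certificate `(P, Λ)` for the closed-loop Lyapunov LMI. -/
theorem convexification_lossless_linear_plant
    (n nu ny nφ : ℕ)
    (AG : Matrix (Fin n) (Fin n) ℝ) (BG : Matrix (Fin n) (Fin nu) ℝ)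
    (CG : Matrix (Fin ny) (Fin n) ℝ)
    (ρ : ℝ) (hρ0 : 0 ≤ ρ) (hρ1 : ρ < 1)
    (X Y : Matrix (Fin n) (Fin n) ℝ) (hXsymm : X.IsSymm) (hYsymm : Y.IsSymm)
    (Λ : Matrix (Fin nφ) (Fin nφ) ℝ)
    (hΛdiag : ∀ i j, i ≠ j → Λ i j = 0) (hΛ : Λ.PosDef)
    (N11 : Matrix (Fin n) (Fin n) ℝ) (N12 : Matrix (Fin n) (Fin ny) ℝ)
    (N21 : Matrix (Fin nu) (Fin n) ℝ) (N22 : Matrix (Fin nu) (Fin ny) ℝ)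
    (Nhat12 : Matrix (Fin n) (Fin nφ) ℝ) (Nhat21 : Matrix (Fin nφ) (Fin n) ℝ)
    (DK1t : Matrix (Fin nu) (Fin nφ) ℝ)
    (DK3hat : Matrix (Fin nφ) (Fin nφ) ℝ) (DK4hat : Matrix (Fin nφ) (Fin ny) ℝ)
    (T1 T2 : Matrix (Fin n ⊕ Fin n) (Fin n ⊕ Fin n) ℝ)
    (T3 : Matrix (Fin n ⊕ Fin n) (Fin nφ) ℝ) (T4 : Matrix (Fin nφ) (Fin n ⊕ Fin n) ℝ)
    (hT1 : T1 = Matrix.fromBlocks Y 1 1 X)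
    (hT2 : T2 = Matrix.fromBlocks (AG * Y + BG * N21) (AG + BG * N22 * CG)
      N11 (X * AG + N12 * CG))
    (hT3 : T3 = Matrix.fromRows (BG * DK1t) Nhat12)
    (hT4 : T4 = Matrix.fromCols Nhat21 (DK4hat * CG))
    (hBig : (Matrix.fromBlocks
      (Matrix.fromBlocks (ρ ^ 2 • T1) 0 0 Λ) (Matrix.fromBlocks T2ᵀ T4ᵀ T3ᵀ DK3hatᵀ)
      (Matrix.fromBlocks T2 T3 T4 DK3hat) (Matrix.fromBlocks T1 0 0 Λ)).PosDef)
    (U V : Matrix (Fin n) (Fin n) ℝ) (hUdef : U = X) (hVdef : V = X⁻¹ - Y)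
    (hU : IsUnit U) (hV : IsUnit V)
    (𝒴 P : Matrix (Fin n ⊕ Fin n) (Fin n ⊕ Fin n) ℝ)
    (h𝒴 : 𝒴 = Matrix.fromBlocks Y 1 Vᵀ 0)
    (hPdef : P = (𝒴ᵀ)⁻¹ * T1 * 𝒴⁻¹)
    (AKt : Matrix (Fin n) (Fin n) ℝ) (BK2t : Matrix (Fin n) (Fin ny) ℝ)
    (CK1t : Matrix (Fin nu) (Fin n) ℝ) (DK2t : Matrix (Fin nu) (Fin ny) ℝ)
    (BK1t : Matrix (Fin n) (Fin nφ) ℝ) (CK2t : Matrix (Fin nφ) (Fin n) ℝ)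
    (DK3t : Matrix (Fin nφ) (Fin nφ) ℝ) (DK4t : Matrix (Fin nφ) (Fin ny) ℝ)
    (hK : Matrix.fromBlocks AKt BK2t CK1t DK2t =
      (Matrix.fromBlocks U (X * BG) 0 1)⁻¹ *
        (Matrix.fromBlocks N11 N12 N21 N22 - Matrix.fromBlocks (X * AG * Y) 0 0 0) *
        (Matrix.fromBlocks Vᵀ 0 (CG * Y) 1)⁻¹)
    (hBK1t : BK1t = U⁻¹ * (Nhat12 - X * BG * DK1t))
    (hCK2t : CK2t = Λ⁻¹ * (Nhat21 - DK4hat * CG * Y) * (Vᵀ)⁻¹)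
    (hDK3t : DK3t = Λ⁻¹ * DK3hat)
    (hDK4t : DK4t = Λ⁻¹ * DK4hat)
    (𝒜 : Matrix (Fin n ⊕ Fin n) (Fin n ⊕ Fin n) ℝ)
    (h𝒜 : 𝒜 = Matrix.fromBlocks (AG + BG * DK2t * CG) (BG * CK1t) (BK2t * CG) AKt)
    (ℬ : Matrix (Fin n ⊕ Fin n) (Fin nφ) ℝ)
    (hℬ : ℬ = Matrix.fromRows (BG * DK1t) BK1t)
    (𝒞 : Matrix (Fin nφ) (Fin n ⊕ Fin n) ℝ)
    (h𝒞 : 𝒞 = Matrix.fromCols (DK4t * CG) CK2t)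
    (𝒟 : Matrix (Fin nφ) (Fin nφ) ℝ) (h𝒟 : 𝒟 = DK3t) :
    P.PosDef ∧
    (-(Matrix.fromBlocks (𝒜ᵀ * P * 𝒜 - ρ ^ 2 • P) (𝒜ᵀ * P * ℬ)
        (ℬᵀ * P * 𝒜) (ℬᵀ * P * ℬ) +
      (Matrix.fromBlocks 𝒞 𝒟 (0 : Matrix (Fin nφ) (Fin n ⊕ Fin n) ℝ) 1)ᵀ * (Matrix.fromBlocks Λ 0 0 (-Λ)) *
        (Matrix.fromBlocks 𝒞 𝒟 (0 : Matrix (Fin nφ) (Fin n ⊕ Fin n) ℝ) 1))).PosDef := by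
  -- basic unit facts
  have hXu : IsUnit X := hUdef ▸ hU
  have hXd : IsUnit X.det := (Matrix.isUnit_iff_isUnit_det X).mp hXu
  have hVd : IsUnit V.det := (Matrix.isUnit_iff_isUnit_det V).mp hV
  have hVtd : IsUnit Vᵀ.det := by rwa [Matrix.det_transpose]
  have hUd : IsUnit U.det := (Matrix.isUnit_iff_isUnit_det U).mp hU
  have hΛd : IsUnit Λ.det := (Matrix.isUnit_iff_isUnit_det Λ).mp hΛ.isUnit
  haveI : Invertible Λ := hΛ.isUnit.invertible
  haveI : Invertible Vᵀ := ((Matrix.isUnit_iff_isUnit_det _).mpr hVtd).invertible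
  haveI : Invertible U := hU.invertible
  have hΛt : Λᵀ = Λ := by
    have h := hΛ.1.eq
    rwa [conjTranspose_eq_transpose_of_trivial] at h
  have hXt : Xᵀ = X := hXsymm
  have hYt : Yᵀ = Y := hYsymm
  have hUt : Uᵀ = U := by rw [hUdef, hXt]
  have hVX : V * X = 1 - Y * X := by
    rw [hVdef, Matrix.sub_mul, Matrix.nonsing_inv_mul X hXd]
  -- the matrix 𝒵 with P * 𝒴 = 𝒵
  set Z : Matrix (Fin n ⊕ Fin n) (Fin n ⊕ Fin n) ℝ := Matrix.fromBlocks 1 X 0 U with hZ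
  have hZt : Zᵀ = Matrix.fromBlocks 1 0 X U := by
    rw [hZ, Matrix.fromBlocks_transpose, Matrix.transpose_one, Matrix.transpose_zero, hXt, hUt]
  have hYZ : 𝒴ᵀ * Z = T1 := by
    rw [h𝒴, hT1, hZ, Matrix.fromBlocks_transpose, Matrix.transpose_one, Matrix.transpose_zero,
      Matrix.transpose_transpose, hYt, Matrix.fromBlocks_multiply, Matrix.fromBlocks_inj]
    refine ⟨by simp, ?_, by simp, by simp⟩
    rw [hUdef, hVX]
    abel
  -- 𝒴 is invertible
  have hYiYu : 𝒴 * Matrix.fromBlocks (0 : Matrix (Fin n) (Fin n) ℝ) (Vᵀ)⁻¹ 1 (-(Y * (Vᵀ)⁻¹)) = 1 := by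
    rw [h𝒴, Matrix.fromBlocks_multiply, ← Matrix.fromBlocks_one, Matrix.fromBlocks_inj]
    refine ⟨by simp, by simp, by simp, ?_⟩
    simp [Matrix.mul_inv_of_invertible]
  have hYuYi : Matrix.fromBlocks (0 : Matrix (Fin n) (Fin n) ℝ) (Vᵀ)⁻¹ 1 (-(Y * (Vᵀ)⁻¹)) * 𝒴 = 1 := by
    rw [h𝒴, Matrix.fromBlocks_multiply, ← Matrix.fromBlocks_one, Matrix.fromBlocks_inj]
    refine ⟨by simp, by simp, ?_, by simp⟩
    rw [Matrix.neg_mul, Matrix.mul_assoc, Matrix.inv_mul_of_invertible, Matrix.mul_one]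
    simp
  have hYu : IsUnit 𝒴 := isUnit_iff_exists.mpr ⟨_, hYiYu, hYuYi⟩
  have hYd : IsUnit 𝒴.det := (Matrix.isUnit_iff_isUnit_det 𝒴).mp hYu
  haveI : Invertible 𝒴 := hYu.invertible
  -- positive definiteness of T1 and P
  have hT1PD : T1.PosDef := my_posDef_blocks₁₁ (my_posDef_blocks₂₂ hBig)
  have hPPD : P.PosDef := by
    rw [hPdef, ← Matrix.transpose_nonsing_inv]
    exact my_posDef_conj hT1PD (Matrix.isUnit_nonsing_inv_iff.mpr hYu)
  haveI : Invertible P := hPPD.isUnit.invertible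
  have hPd : IsUnit P.det := (Matrix.isUnit_iff_isUnit_det P).mp hPPD.isUnit
  have hPt : Pᵀ = P := by
    have h := hPPD.1.eq
    rwa [conjTranspose_eq_transpose_of_trivial] at h
  have hPY : P * 𝒴 = Z := by
    rw [hPdef, Matrix.mul_assoc, Matrix.inv_mul_of_invertible, Matrix.mul_one, ← hYZ,
      Matrix.inv_mul_cancel_left_of_invertible]
  have hYPY : 𝒴ᵀ * P * 𝒴 = T1 := by rw [Matrix.mul_assoc, hPY, hYZ]
  -- block equations from the controller recovery
  have hFd : IsUnit (Matrix.fromBlocks U (X * BG) (0 : Matrix (Fin nu) (Fin n) ℝ)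
      (1 : Matrix (Fin nu) (Fin nu) ℝ)).det := by
    rw [Matrix.det_fromBlocks_zero₂₁]
    simpa using hUd
  have hGd : IsUnit (Matrix.fromBlocks Vᵀ (0 : Matrix (Fin n) (Fin ny) ℝ) (CG * Y)
      (1 : Matrix (Fin ny) (Fin ny) ℝ)).det := by
    rw [Matrix.det_fromBlocks_zero₁₂]
    simpa using hVtd
  set F : Matrix (Fin n ⊕ Fin nu) (Fin n ⊕ Fin nu) ℝ :=
    Matrix.fromBlocks U (X * BG) (0 : Matrix (Fin nu) (Fin n) ℝ)
      (1 : Matrix (Fin nu) (Fin nu) ℝ) with hF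
  set G : Matrix (Fin n ⊕ Fin ny) (Fin n ⊕ Fin ny) ℝ :=
    Matrix.fromBlocks Vᵀ (0 : Matrix (Fin n) (Fin ny) ℝ) (CG * Y)
      (1 : Matrix (Fin ny) (Fin ny) ℝ) with hG
  have hK' : F * Matrix.fromBlocks AKt BK2t CK1t DK2t * G =
      Matrix.fromBlocks N11 N12 N21 N22 - Matrix.fromBlocks (X * AG * Y) 0 0 0 := by
    rw [hK]
    calc F * (F⁻¹ * (Matrix.fromBlocks N11 N12 N21 N22 -
          Matrix.fromBlocks (X * AG * Y) 0 0 0) * G⁻¹) * G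
        = (F * F⁻¹) * (Matrix.fromBlocks N11 N12 N21 N22 -
            Matrix.fromBlocks (X * AG * Y) 0 0 0) * (G⁻¹ * G) := by
          simp only [Matrix.mul_assoc]
      _ = _ := by
          rw [Matrix.mul_nonsing_inv _ hFd, Matrix.nonsing_inv_mul _ hGd,
            Matrix.one_mul, Matrix.mul_one]
  rw [hF, hG] at hK'
  rw [Matrix.fromBlocks_multiply, Matrix.fromBlocks_multiply, sub_eq_add_neg,
    Matrix.fromBlocks_neg, Matrix.fromBlocks_add, Matrix.fromBlocks_inj] at hK'
  obtain ⟨E11, E12, E21, E22⟩ := hK'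
  simp only [Matrix.zero_mul, Matrix.one_mul, Matrix.mul_zero, Matrix.mul_one, add_zero,
    zero_add, neg_zero] at E11 E12 E21 E22
  have E11' : N11 = (U * AKt + X * BG * CK1t) * Vᵀ +
      (U * BK2t + X * BG * DK2t) * (CG * Y) + X * AG * Y := by
    rw [E11]; abel
  -- the four change-of-variable identities
  have h2 : Zᵀ * 𝒜 * 𝒴 = T2 := by
    rw [h𝒜, h𝒴, hT2, hZt, Matrix.fromBlocks_multiply, Matrix.fromBlocks_multiply,
      Matrix.fromBlocks_inj]
    refine ⟨?_, ?_, ?_, ?_⟩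
    · rw [← E21]
      simp only [Matrix.zero_mul, Matrix.one_mul, Matrix.mul_zero, Matrix.mul_one, add_zero,
        zero_add, Matrix.mul_add, Matrix.add_mul, Matrix.mul_assoc]
      abel
    · rw [← E22]
      simp only [Matrix.zero_mul, Matrix.one_mul, Matrix.mul_zero, Matrix.mul_one, add_zero,
        zero_add, Matrix.mul_assoc]
    · rw [E11']
      simp only [Matrix.zero_mul, Matrix.one_mul, Matrix.mul_zero, Matrix.mul_one, add_zero,
        zero_add, Matrix.mul_add, Matrix.add_mul, Matrix.mul_assoc]
      abel
    · rw [← E12]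
      simp only [Matrix.zero_mul, Matrix.one_mul, Matrix.mul_zero, Matrix.mul_one, add_zero,
        zero_add, Matrix.mul_add, Matrix.add_mul, Matrix.mul_assoc]
      abel
  have h3 : Zᵀ * ℬ = T3 := by
    rw [hℬ, hT3, hZt, Matrix.fromBlocks_mul_fromRows, Matrix.fromRows_ext_iff]
    constructor
    · simp
    · rw [hBK1t, Matrix.mul_inv_cancel_left_of_invertible]
      simp only [Matrix.zero_mul, Matrix.one_mul, Matrix.mul_zero, Matrix.mul_one, add_zero,
        zero_add, Matrix.mul_assoc]
      abel
  have h4 : Λ * 𝒞 * 𝒴 = T4 := by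
    rw [h𝒞, h𝒴, hT4, Matrix.mul_fromCols, Matrix.fromCols_mul_fromBlocks,
      Matrix.fromCols_ext_iff, hDK4t, hCK2t]
    have e1 : Λ * (Λ⁻¹ * DK4hat * CG) = DK4hat * CG := by
      rw [Matrix.mul_assoc Λ⁻¹, Matrix.mul_inv_cancel_left_of_invertible]
    have e2 : Λ * (Λ⁻¹ * (Nhat21 - DK4hat * CG * Y) * Vᵀ⁻¹) * Vᵀ =
        Nhat21 - DK4hat * CG * Y := by
      rw [Matrix.mul_assoc Λ⁻¹, Matrix.mul_inv_cancel_left_of_invertible,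
        Matrix.inv_mul_cancel_right_of_invertible]
    constructor
    · rw [e1, e2]
      simp only [Matrix.mul_assoc]
      abel
    · rw [e1]
      simp
  have h5 : Λ * 𝒟 = DK3hat := by
    rw [h𝒟, hDK3t, Matrix.mul_inv_cancel_left_of_invertible]
  -- assembling the congruence at the σ-level
  have A1 : (Matrix.fromBlocks 𝒴 0 0 (1 : Matrix (Fin nφ) (Fin nφ) ℝ))ᵀ *
      Matrix.fromBlocks (ρ ^ 2 • P) 0 0 Λ *
      Matrix.fromBlocks 𝒴 0 0 (1 : Matrix (Fin nφ) (Fin nφ) ℝ) =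
      Matrix.fromBlocks (ρ ^ 2 • T1) 0 0 Λ := by
    rw [Matrix.fromBlocks_transpose, Matrix.transpose_zero, Matrix.transpose_one,
      Matrix.fromBlocks_multiply, Matrix.fromBlocks_multiply, Matrix.fromBlocks_inj]
    refine ⟨?_, by simp, by simp, by simp⟩
    simp only [Matrix.transpose_zero, Matrix.mul_zero, Matrix.zero_mul, Matrix.mul_one,
      Matrix.one_mul, add_zero, zero_add, Matrix.mul_smul, Matrix.smul_mul]
    rw [← hYPY, Matrix.mul_assoc]
  have A3 : (Matrix.fromBlocks Z 0 0 Λ)ᵀ * Matrix.fromBlocks 𝒜 ℬ 𝒞 𝒟 *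
      Matrix.fromBlocks 𝒴 0 0 (1 : Matrix (Fin nφ) (Fin nφ) ℝ) =
      Matrix.fromBlocks T2 T3 T4 DK3hat := by
    rw [Matrix.fromBlocks_transpose, Matrix.transpose_zero, hΛt,
      Matrix.fromBlocks_multiply, Matrix.fromBlocks_multiply, Matrix.fromBlocks_inj]
    refine ⟨?_, ?_, ?_, ?_⟩
    · simp only [Matrix.transpose_zero, Matrix.mul_zero, Matrix.zero_mul, Matrix.mul_one,
        Matrix.one_mul, add_zero, zero_add]
      exact h2
    · simp only [Matrix.transpose_zero, Matrix.mul_zero, Matrix.zero_mul, Matrix.mul_one,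
        Matrix.one_mul, add_zero, zero_add]
      exact h3
    · simp only [Matrix.transpose_zero, Matrix.mul_zero, Matrix.zero_mul, Matrix.mul_one,
        Matrix.one_mul, add_zero, zero_add]
      exact h4
    · simp only [Matrix.transpose_zero, Matrix.mul_zero, Matrix.zero_mul, Matrix.mul_one,
        Matrix.one_mul, add_zero, zero_add]
      exact h5
  have A2 : (Matrix.fromBlocks 𝒴 0 0 (1 : Matrix (Fin nφ) (Fin nφ) ℝ))ᵀ *
      (Matrix.fromBlocks 𝒜 ℬ 𝒞 𝒟)ᵀ * (Matrix.fromBlocks Z 0 0 Λ) =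
      Matrix.fromBlocks T2ᵀ T4ᵀ T3ᵀ DK3hatᵀ := by
    have e : Matrix.fromBlocks T2ᵀ T4ᵀ T3ᵀ DK3hatᵀ = (Matrix.fromBlocks T2 T3 T4 DK3hat)ᵀ := by
      rw [Matrix.fromBlocks_transpose]
    have hΛt2 : (Matrix.fromBlocks Z 0 0 Λ : Matrix ((Fin n ⊕ Fin n) ⊕ Fin nφ)
        ((Fin n ⊕ Fin n) ⊕ Fin nφ) ℝ)ᵀᵀ = Matrix.fromBlocks Z 0 0 Λ := by
      rw [Matrix.transpose_transpose]
    rw [e, ← A3, Matrix.transpose_mul, Matrix.transpose_mul, Matrix.transpose_transpose,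
      Matrix.mul_assoc]
  have A4 : (Matrix.fromBlocks Z 0 0 Λ)ᵀ * Matrix.fromBlocks P⁻¹ 0 0 Λ⁻¹ *
      (Matrix.fromBlocks Z 0 0 Λ) = Matrix.fromBlocks T1 0 0 Λ := by
    rw [Matrix.fromBlocks_transpose, Matrix.transpose_zero, hΛt,
      Matrix.fromBlocks_multiply, Matrix.fromBlocks_multiply, Matrix.fromBlocks_inj]
    refine ⟨?_, by simp, by simp, ?_⟩
    · simp only [Matrix.transpose_zero, Matrix.mul_zero, Matrix.zero_mul, Matrix.mul_one,
        Matrix.one_mul, add_zero, zero_add]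
      rw [← hPY, Matrix.transpose_mul, hPt, Matrix.mul_assoc, Matrix.mul_assoc,
        Matrix.inv_mul_cancel_left_of_invertible, ← Matrix.mul_assoc, hYPY]
    · simp only [Matrix.transpose_zero, Matrix.mul_zero, Matrix.zero_mul, Matrix.mul_one,
        Matrix.one_mul, add_zero, zero_add]
      rw [Matrix.mul_inv_of_invertible, Matrix.one_mul]
  -- the full congruence
  set W1 : Matrix ((Fin n ⊕ Fin n) ⊕ Fin nφ) ((Fin n ⊕ Fin n) ⊕ Fin nφ) ℝ :=
    Matrix.fromBlocks 𝒴 0 0 1 with hW1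
  set W2 : Matrix ((Fin n ⊕ Fin n) ⊕ Fin nφ) ((Fin n ⊕ Fin n) ⊕ Fin nφ) ℝ :=
    Matrix.fromBlocks Z 0 0 Λ with hW2
  set Rm : Matrix ((Fin n ⊕ Fin n) ⊕ Fin nφ) ((Fin n ⊕ Fin n) ⊕ Fin nφ) ℝ :=
    Matrix.fromBlocks 𝒜 ℬ 𝒞 𝒟 with hRm
  set Nm : Matrix (((Fin n ⊕ Fin n) ⊕ Fin nφ) ⊕ ((Fin n ⊕ Fin n) ⊕ Fin nφ))
      (((Fin n ⊕ Fin n) ⊕ Fin nφ) ⊕ ((Fin n ⊕ Fin n) ⊕ Fin nφ)) ℝ :=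
    Matrix.fromBlocks (Matrix.fromBlocks (ρ ^ 2 • P) 0 0 Λ) Rmᵀ Rm
      (Matrix.fromBlocks P⁻¹ 0 0 Λ⁻¹) with hNm
  set Wm : Matrix (((Fin n ⊕ Fin n) ⊕ Fin nφ) ⊕ ((Fin n ⊕ Fin n) ⊕ Fin nφ))
      (((Fin n ⊕ Fin n) ⊕ Fin nφ) ⊕ ((Fin n ⊕ Fin n) ⊕ Fin nφ)) ℝ :=
    Matrix.fromBlocks W1 0 0 W2 with hWm
  have hBigEq : Wmᵀ * Nm * Wm = Matrix.fromBlocks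
      (Matrix.fromBlocks (ρ ^ 2 • T1) 0 0 Λ) (Matrix.fromBlocks T2ᵀ T4ᵀ T3ᵀ DK3hatᵀ)
      (Matrix.fromBlocks T2 T3 T4 DK3hat) (Matrix.fromBlocks T1 0 0 Λ) := by
    rw [hWm, hNm, Matrix.fromBlocks_transpose, Matrix.transpose_zero,
      Matrix.fromBlocks_multiply, Matrix.fromBlocks_multiply]
    simp only [Matrix.mul_zero, Matrix.zero_mul, add_zero, zero_add]
    rw [← A1, ← A2, ← A3, ← A4, hW1, hW2, hRm, Matrix.fromBlocks_inj]
    exact ⟨rfl, rfl, rfl, rfl⟩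
  -- Wm is invertible
  have hW1u : IsUnit W1.det := by
    rw [hW1, Matrix.det_fromBlocks_zero₂₁]
    simpa using hYd
  have hW2u : IsUnit W2.det := by
    rw [hW2, Matrix.det_fromBlocks_zero₂₁, hZ, Matrix.det_fromBlocks_zero₂₁]
    simpa using hUd.mul hΛd
  have hWmu : IsUnit Wm := by
    rw [Matrix.isUnit_iff_isUnit_det, hWm, Matrix.det_fromBlocks_zero₂₁]
    exact hW1u.mul hW2u
  haveI : Invertible Wm := hWmu.invertible
  -- Nm is positive definite
  have hNmPD : Nm.PosDef := by
    have e : Nm = (Wm⁻¹)ᵀ * (Wmᵀ * Nm * Wm) * Wm⁻¹ := by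
      rw [Matrix.transpose_nonsing_inv]
      simp only [Matrix.mul_assoc]
      rw [Matrix.mul_inv_of_invertible, Matrix.mul_one,
        Matrix.inv_mul_cancel_left_of_invertible]
    rw [e, hBigEq]
    exact my_posDef_conj hBig (Matrix.isUnit_nonsing_inv_iff.mpr hWmu)
  -- Schur complement
  have hDqPD : (Matrix.fromBlocks P⁻¹ 0 0 Λ⁻¹ : Matrix ((Fin n ⊕ Fin n) ⊕ Fin nφ)
      ((Fin n ⊕ Fin n) ⊕ Fin nφ) ℝ).PosDef :=
    my_posDef_fromBlocks_diag hPPD.inv hΛ.inv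
  have hDqinv : (Matrix.fromBlocks P⁻¹ 0 0 Λ⁻¹ : Matrix ((Fin n ⊕ Fin n) ⊕ Fin nφ)
      ((Fin n ⊕ Fin n) ⊕ Fin nφ) ℝ)⁻¹ = Matrix.fromBlocks P 0 0 Λ := by
    apply Matrix.inv_eq_right_inv
    rw [Matrix.fromBlocks_multiply, ← Matrix.fromBlocks_one, Matrix.fromBlocks_inj]
    refine ⟨by simp [Matrix.inv_mul_of_invertible], by simp, by simp,
      by simp [Matrix.inv_mul_of_invertible]⟩
  have hpre : (Matrix.fromBlocks (Matrix.fromBlocks (ρ ^ 2 • P) 0 0 Λ) Rmᵀ (Rmᵀ)ᵀ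
      (Matrix.fromBlocks P⁻¹ 0 0 Λ⁻¹)).PosDef := by
    rw [Matrix.transpose_transpose, ← hNm]
    exact hNmPD
  have hSchur := my_posDef_schur hDqPD hpre
  rw [hDqinv, Matrix.transpose_transpose] at hSchur
  refine ⟨hPPD, ?_⟩
  have hfinal : -(Matrix.fromBlocks (𝒜ᵀ * P * 𝒜 - ρ ^ 2 • P) (𝒜ᵀ * P * ℬ)
        (ℬᵀ * P * 𝒜) (ℬᵀ * P * ℬ) +
      (Matrix.fromBlocks 𝒞 𝒟 (0 : Matrix (Fin nφ) (Fin n ⊕ Fin n) ℝ) 1)ᵀ * (Matrix.fromBlocks Λ 0 0 (-Λ)) *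
        (Matrix.fromBlocks 𝒞 𝒟 (0 : Matrix (Fin nφ) (Fin n ⊕ Fin n) ℝ) 1)) =
      Matrix.fromBlocks (ρ ^ 2 • P) 0 0 Λ - Rmᵀ * Matrix.fromBlocks P 0 0 Λ * Rm := by
    rw [hRm]
    simp only [Matrix.fromBlocks_transpose, Matrix.transpose_zero, Matrix.transpose_one,
      Matrix.fromBlocks_multiply, sub_eq_add_neg, Matrix.fromBlocks_neg, Matrix.fromBlocks_add]
    rw [Matrix.fromBlocks_inj]
    refine ⟨?_, ?_, ?_, ?_⟩ <;>
    · simp only [Matrix.mul_zero, Matrix.zero_mul, Matrix.mul_one, Matrix.one_mul, add_zero,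
        zero_add, Matrix.mul_add, Matrix.add_mul, Matrix.mul_neg, Matrix.neg_mul, neg_neg,
        neg_add, Matrix.mul_assoc]
      try abel
  rw [hfinal]
  exact hSchur
end
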